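/- arXiv:1201.6356 — 3 statements merged into one kernel-verified Lean document; each statement's English description precedes it below -/
import Mathlib

section
/- In the region {r > 0, p_ψ ≠ 0} of the phase space of the planar Kepler problem, the coordinates φ = ψ - 2 r p_r / p_ψ, I = p_ψ, q = ln(k m² r / p_ψ²), p = r p_r are canonical: dI ∧ dφ + dp ∧ dq = dp_ψ ∧ dψ + dp_r ∧ dr. -/
/-- The coordinates `φ = ψ - 2 r p_r / p_ψ`, `I = p_ψ`, `q = ln(k m² r / p_ψ²)`,
`p = r p_r` on the region `{r > 0, p_ψ ≠ 0}` of the phase space of the planar Kepler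
problem are canonical: the pullback of `dI ∧ dφ + dp ∧ dq` under the coordinate map
equals `dp_ψ ∧ dψ + dp_r ∧ dr`.  Here a point `z : Fin 4 → ℝ` has coordinates
`z 0 = ψ`, `z 1 = r`, `z 2 = p_ψ`, `z 3 = p_r`. -/
theorem stmt5 (m k : ℝ) (hm : 0 < m) (hk : 0 < k)
    (z : Fin 4 → ℝ) (hr : 0 < z 1) (hpsi : z 2 ≠ 0) (u v : Fin 4 → ℝ) :
    let Φ : (Fin 4 → ℝ) → (Fin 4 → ℝ) := fun w =>
      ![w 0 - 2 * w 1 * w 3 / w 2, w 2, Real.log (k * m ^ 2 * w 1 / (w 2) ^ 2),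
        w 1 * w 3]
    let a := fderiv ℝ Φ z u
    let b := fderiv ℝ Φ z v
    (a 1 * b 0 - b 1 * a 0) + (a 3 * b 2 - b 3 * a 2) =
      (u 2 * v 0 - v 2 * u 0) + (u 3 * v 1 - v 3 * u 1) := by
  intro Φ a b
  have hp := fun i : Fin 4 => hasFDerivAt_apply (𝕜 := ℝ) (F' := fun _ : Fin 4 => ℝ) i z
  have hinv := (hasDerivAt_inv hpsi).comp_hasFDerivAt z (hp 2)
  have hinv2 := (((hasDerivAt_pow 2 (z 2)).inv (pow_ne_zero 2 hpsi))).comp_hasFDerivAt z (hp 2)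
  simp only [Function.comp_def] at hinv hinv2
  have h0' := (hp 0).sub ((((hp 1).const_mul 2).mul (hp 3)).mul hinv)
  have harg : k * m ^ 2 * z 1 * ((z 2) ^ 2)⁻¹ ≠ 0 := by positivity
  have h2' := ((((hp 1).const_mul (k * m ^ 2)).mul hinv2).log harg)
  have h3' := (hp 1).mul (hp 3)
  set P : Fin 4 → ((Fin 4 → ℝ) →L[ℝ] ℝ) := fun i => ContinuousLinearMap.proj i with hP
  have H0 : HasFDerivAt (fun w : Fin 4 → ℝ => w 0 - 2 * w 1 * w 3 / w 2)
      (P 0 + (2 * z 1 * z 3 / (z 2) ^ 2) • P 2 - (2 * z 3 / z 2) • P 1 - (2 * z 1 / z 2) • P 3) z := by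
    simp only [div_eq_mul_inv]
    refine HasFDerivAt.congr_fderiv h0' ?_
    ext w
    simp only [hP, ContinuousLinearMap.add_apply, ContinuousLinearMap.sub_apply,
      ContinuousLinearMap.smul_apply, ContinuousLinearMap.proj_apply, smul_eq_mul, Pi.mul_apply,
      Pi.inv_apply]
    field_simp
    ring
  have H2 : HasFDerivAt (fun w : Fin 4 → ℝ => Real.log (k * m ^ 2 * w 1 / (w 2) ^ 2))
      ((z 1)⁻¹ • P 1 - (2 / z 2) • P 2) z := by
    simp only [div_eq_mul_inv]
    refine HasFDerivAt.congr_fderiv h2' ?_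
    ext w
    simp only [hP, ContinuousLinearMap.add_apply, ContinuousLinearMap.sub_apply,
      ContinuousLinearMap.smul_apply, ContinuousLinearMap.proj_apply, smul_eq_mul, Pi.mul_apply,
      Pi.inv_apply]
    have h1 : z 1 ≠ 0 := ne_of_gt hr
    have hkm : k * m ^ 2 ≠ 0 := by positivity
    field_simp
    ring
  have H3 : HasFDerivAt (fun w : Fin 4 → ℝ => w 1 * w 3) (z 3 • P 1 + z 1 • P 3) z := by
    refine HasFDerivAt.congr_fderiv h3' ?_
    ext w
    simp only [hP, ContinuousLinearMap.add_apply, ContinuousLinearMap.smul_apply,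
      ContinuousLinearMap.proj_apply, smul_eq_mul]
    ring
  have hΦ : HasFDerivAt Φ (ContinuousLinearMap.pi
      ![P 0 + (2 * z 1 * z 3 / (z 2) ^ 2) • P 2 - (2 * z 3 / z 2) • P 1 - (2 * z 1 / z 2) • P 3,
        P 2, (z 1)⁻¹ • P 1 - (2 / z 2) • P 2, z 3 • P 1 + z 1 • P 3]) z := by
    refine hasFDerivAt_pi.mpr ?_
    intro i
    fin_cases i <;>
      simp only [Φ, Matrix.cons_val_zero, Matrix.cons_val_one, Matrix.head_cons,
        Matrix.cons_val_two, Matrix.tail_cons, Matrix.cons_val_three, Fin.isValue]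
    · exact H0
    · exact hp 2
    · exact H2
    · exact H3
  have ha : a = fun i => (![P 0 + (2 * z 1 * z 3 / (z 2) ^ 2) • P 2 - (2 * z 3 / z 2) • P 1 - (2 * z 1 / z 2) • P 3,
        P 2, (z 1)⁻¹ • P 1 - (2 / z 2) • P 2, z 3 • P 1 + z 1 • P 3] i) u := by
    show fderiv ℝ Φ z u = _
    rw [hΦ.fderiv]; rfl
  have hb : b = fun i => (![P 0 + (2 * z 1 * z 3 / (z 2) ^ 2) • P 2 - (2 * z 3 / z 2) • P 1 - (2 * z 1 / z 2) • P 3,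
        P 2, (z 1)⁻¹ • P 1 - (2 / z 2) • P 2, z 3 • P 1 + z 1 • P 3] i) v := by
    show fderiv ℝ Φ z v = _
    rw [hΦ.fderiv]; rfl
  rw [ha, hb]
  simp only [hP, Matrix.cons_val_zero, Matrix.cons_val_one, Matrix.head_cons, Matrix.cons_val_two,
    Matrix.tail_cons, Matrix.cons_val_three, ContinuousLinearMap.add_apply,
    ContinuousLinearMap.sub_apply, ContinuousLinearMap.smul_apply,
    ContinuousLinearMap.proj_apply, smul_eq_mul]
  have h1 : z 1 ≠ 0 := ne_of_gt hr
  field_simp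
  ring
end

section
/- For θ ∈ (0,1), ρ > 0, define the generalized Hill potential F_{θ,ρ}(x,y) = (θ(1-θ)ρ²)^{-1} ( 1/|x| - (1-θ)/|x - θρy| - θ/|x + (1-θ)ρy| ) on the region |x| > ρ|y|. Then F_{θ,ρ} extends to an analytic (in particular continuous) function of (x, y, θ, ρ) on the region {|x| > |ρ y|, 0 ≤ θ ≤ 1}, and its value at ρ = 0 equals the Hill potential: F_{θ,0}(x,y) = F(x,y) = (|x|²|y|² - 3⟨x,y⟩²)/(2|x|⁵). -/
/-- The Hill potential `F(x,y) = (|x|²|y|² - 3⟨x,y⟩²)/(2|x|⁵)`. -/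
noncomputable def hillF (x y : EuclideanSpace ℝ (Fin 2)) : ℝ :=
  (‖x‖ ^ 2 * ‖y‖ ^ 2 - 3 * (inner ℝ x y : ℝ) ^ 2) / (2 * ‖x‖ ^ 5)

open Complex in
theorem my_analyticAt_sqrt {x : ℝ} (hx : 0 < x) : AnalyticAt ℝ Real.sqrt x := by
  have h1 : AnalyticAt ℂ (fun z : ℂ => z ^ (1/2 : ℂ)) (x : ℂ) :=
    analyticAt_id.cpow analyticAt_const (by simp [Complex.mem_slitPlane_iff, hx])
  have h2 : AnalyticAt ℝ
      (fun t : ℝ => Complex.reCLM ((fun z : ℂ => z ^ (1/2:ℂ)) (Complex.ofRealCLM t))) x :=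
    (Complex.reCLM.analyticAt _).comp ((h1.restrictScalars).comp (Complex.ofRealCLM.analyticAt _))
  apply h2.congr
  filter_upwards [isOpen_Ioi.eventually_mem (show x ∈ Set.Ioi (0:ℝ) from hx)] with t ht
  have ht' : (0:ℝ) ≤ t := le_of_lt ht
  have : ((t:ℂ) ^ (1/2 : ℂ)) = ((t ^ ((1:ℝ)/2) : ℝ) : ℂ) := by
    rw [Complex.ofReal_cpow ht']
    norm_num
  simp only [Complex.ofRealCLM_apply, this, Complex.reCLM_apply, Complex.ofReal_re]
  rw [Real.sqrt_eq_rpow]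

theorem my_analyticAt_sqrt_comp {E : Type*} [NormedAddCommGroup E] [NormedSpace ℝ E]
    {f : E → ℝ} {x : E} (hf : AnalyticAt ℝ f x) (h : 0 < f x) :
    AnalyticAt ℝ (fun y => Real.sqrt (f y)) x :=
  (my_analyticAt_sqrt h).comp hf

theorem my_key (a b c q w θ ρ : ℝ) (ha : 0 < a) (hb : 0 < b) (hc : 0 < c)
    (hθ : θ ≠ 0) (hθ1 : (1:ℝ) - θ ≠ 0) (hρ : ρ ≠ 0)
    (hb2 : b^2 = a^2 - 2*θ*ρ*q + θ^2*ρ^2*w)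
    (hc2 : c^2 = a^2 + 2*(1-θ)*ρ*q + (1-θ)^2*ρ^2*w) :
    (θ*(1-θ)*ρ^2)⁻¹ * (1/a - (1-θ)/b - θ/c) =
      (w * (θ*c*(a+c) + (1-θ)*b*(a+b)) * (b+c) + 2*q*(ρ*w*(2*θ-1) - 2*q)*(a+b+c))
        / (a*b*c*(a+b)*(a+c)*(b+c)) := by
  have ha' := ha.ne'
  have hb' := hb.ne'
  have hc' := hc.ne'
  have hab : a + b ≠ 0 := by positivity
  have hac : a + c ≠ 0 := by positivity
  have hbc : b + c ≠ 0 := by positivity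
  have stepA : (θ*(1-θ)*ρ^2)⁻¹ * (1/a - (1-θ)/b - θ/c)
      = (b*c - (1-θ)*a*c - θ*a*b) / (θ*(1-θ)*ρ^2*a*b*c) := by
    field_simp
  have stepB : (b*c - (1-θ)*a*c - θ*a*b) * (a*b*c*(a+b)*(a+c)*(b+c))
      = (w * (θ*c*(a+c) + (1-θ)*b*(a+b)) * (b+c) + 2*q*(ρ*w*(2*θ-1) - 2*q)*(a+b+c))
        * (θ*(1-θ)*ρ^2*a*b*c) := by
    linear_combination (-1*a*c*w^2*θ^3*ρ^4 + 2*a*c*w^2*θ^4*ρ^4 + -1*a*c*w^2*θ^5*ρ^4 + 2*a*c*q*w*θ*ρ^3 + -4*a*c*q*w*θ^2*ρ^3 + 2*a*c*q*w*θ^4*ρ^3 + 4*a*c*q^2*θ*ρ^2 + -4*a*c*q^2*θ^2*ρ^2 + 1*a*c^3*w*θ^3*ρ^2 + -2*a*c^3*q*θ*ρ + -1*a*b*c^2*w*θ*ρ^2 + 2*a*b*c^2*w*θ^2*ρ^2 + -1*a*b*c^2*w*θ^3*ρ^2 + 1*a*b*c^4 + -1*a*b^2*c*w*θ*ρ^2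 + 2*a*b^2*c*w*θ^2*ρ^2 + -1*a*b^2*c*w*θ^3*ρ^2 + 1*a*b^2*c^3 + -1*a^2*c^2*w*θ*ρ^2 + 2*a^2*c^2*w*θ^2*ρ^2 + -1*a^2*c^2*w*θ^3*ρ^2 + -2*a^2*c^2*q*θ*ρ + 2*a^2*c^2*q*θ^2*ρ + 1*a^2*c^4*θ + -1*a^2*b*c*w*θ*ρ^2 + 2*a^2*b*c*w*θ^2*ρ^2 + -1*a^2*b*c*w*θ^3*ρ^2 + 1*a^2*b*c^3 + 1*a^2*b^2*c^2 + -1*a^2*b^2*c^2*θ + -1*a^3*c*w*θ*ρ^2 + 2*a^3*c*w*θ^2*ρ^2 + -2*a^3*c*w*θ^3*ρ^2 + 2*a^3*c*q*θ^2*ρ + 1*a^3*c^3*θ + -1*a^3*b*c^2*θ + -1*a^3*b^2*c*θ + -1*a^4*c^2*θ + -1*a^4*b*c*θ + -1*a^5*c*θ) * hb2 + (1*a*c*w^2*θ^5*ρ^4 + -2*a*c*q*w*θ^3*ρ^3 + -2*a*c*q*w*θ^4*ρ^3 + 4*a*c*q^2*θ^2*ρ^2 + 1*a*b*c^2*w*θ^3*ρ^2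 + -2*a*b*c^2*q*θ*ρ + 1*a^2*c^2*w*θ^3*ρ^2 + -2*a^2*c^2*q*θ^2*ρ + 1*a^2*b*c*w*θ^3*ρ^2 + -2*a^2*b*c*q*θ*ρ + 2*a^3*c*w*θ^3*ρ^2 + -2*a^3*c*q*θ*ρ + -2*a^3*c*q*θ^2*ρ + 1*a^3*b*c^2*θ + 1*a^4*c^2*θ + 1*a^4*b*c*θ + 1*a^5*c*θ) * hc2
  rw [stepA, div_eq_div_iff (by positivity) (by positivity)]
  linear_combination stepB

theorem my_analyticAt_norm {E : Type*} [NormedAddCommGroup E] [NormedSpace ℝ E]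
    {F : Type*} [NormedAddCommGroup F] [InnerProductSpace ℝ F]
    {f : E → F} {x : E} (hf : AnalyticAt ℝ f x) (h : f x ≠ 0) :
    AnalyticAt ℝ (fun y => ‖f y‖) x := by
  have hinner : AnalyticAt ℝ (fun y => (inner ℝ (f y) (f y) : ℝ)) x :=
    ((innerSL ℝ (E := F)).analyticAt_bilinear (f x, f x)).comp₂ hf hf
  have hpos : 0 < (inner ℝ (f x) (f x) : ℝ) := by
    rw [real_inner_self_eq_norm_sq]
    exact pow_pos (norm_pos_iff.mpr h) 2
  have := my_analyticAt_sqrt_comp hinner hpos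
  refine this.congr (Filter.Eventually.of_forall fun y => ?_)
  show Real.sqrt (inner ℝ (f y) (f y) : ℝ) = ‖f y‖
  rw [real_inner_self_eq_norm_sq, Real.sqrt_sq (norm_nonneg _)]

/-- The generalized Hill potential
`F_{θ,ρ}(x,y) = (θ(1-θ)ρ²)⁻¹ (1/|x| - (1-θ)/|x-θρy| - θ/|x+(1-θ)ρy|)`, a priori defined
for `θ ∈ (0,1)`, `ρ > 0`, `|x| > ρ|y|`, extends to a function `G` of `(x, y, θ, ρ)` that
is analytic (in particular continuous) on the region `{|x| > |ρ| |y|, 0 ≤ θ ≤ 1}`, and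
whose value at `ρ = 0` equals the Hill potential `F(x,y)`. -/
theorem stmt12 :
    ∃ G : EuclideanSpace ℝ (Fin 2) × EuclideanSpace ℝ (Fin 2) × ℝ × ℝ → ℝ,
      AnalyticOn ℝ G
        {p | |p.2.2.2| * ‖p.2.1‖ < ‖p.1‖ ∧ p.2.2.1 ∈ Set.Icc (0 : ℝ) 1} ∧
      ContinuousOn G
        {p | |p.2.2.2| * ‖p.2.1‖ < ‖p.1‖ ∧ p.2.2.1 ∈ Set.Icc (0 : ℝ) 1} ∧
      (∀ (x y : EuclideanSpace ℝ (Fin 2)) (θ ρ : ℝ),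
        θ ∈ Set.Ioo (0 : ℝ) 1 → 0 < ρ → ρ * ‖y‖ < ‖x‖ →
        G (x, y, θ, ρ) = (θ * (1 - θ) * ρ ^ 2)⁻¹ *
          (1 / ‖x‖ - (1 - θ) / ‖x - (θ * ρ) • y‖ - θ / ‖x + ((1 - θ) * ρ) • y‖)) ∧
      (∀ (x y : EuclideanSpace ℝ (Fin 2)) (θ : ℝ), x ≠ 0 → θ ∈ Set.Icc (0 : ℝ) 1 →
        G (x, y, θ, 0) = hillF x y) := by
  set EE := EuclideanSpace ℝ (Fin 2)
  set P := EE × EE × ℝ × ℝ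
  let A : P → ℝ := fun p => ‖p.1‖
  let B : P → ℝ := fun p => ‖p.1 - (p.2.2.1 * p.2.2.2) • p.2.1‖
  let C : P → ℝ := fun p => ‖p.1 + ((1 - p.2.2.1) * p.2.2.2) • p.2.1‖
  let Q : P → ℝ := fun p => (inner ℝ p.1 p.2.1 : ℝ)
  let W : P → ℝ := fun p => (inner ℝ p.2.1 p.2.1 : ℝ)
  let G : P → ℝ := fun p =>
    (W p * (p.2.2.1 * C p * (A p + C p) + (1 - p.2.2.1) * B p * (A p + B p)) * (B p + C p)
      + 2 * Q p * (p.2.2.2 * W p * (2 * p.2.2.1 - 1) - 2 * Q p) * (A p + B p + C p))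
      / (A p * B p * C p * (A p + B p) * (A p + C p) * (B p + C p))
  -- basic nonvanishing facts on the region
  have hne : ∀ x y : EE, ∀ θ ρ : ℝ, |ρ| * ‖y‖ < ‖x‖ → θ ∈ Set.Icc (0:ℝ) 1 →
      x ≠ 0 ∧ x - (θ * ρ) • y ≠ 0 ∧ x + ((1 - θ) * ρ) • y ≠ 0 := by
    intro x y θ ρ hlt hθ
    have h0 : (0:ℝ) ≤ |ρ| * ‖y‖ := by positivity
    have hx : x ≠ 0 := by
      intro h; rw [h, norm_zero] at hlt; exact absurd hlt (not_lt.mpr h0)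
    have hθ1 : |θ| ≤ 1 := abs_le.mpr ⟨by linarith [hθ.1], hθ.2⟩
    have hθ2 : |1 - θ| ≤ 1 := abs_le.mpr ⟨by linarith [hθ.2], by linarith [hθ.1]⟩
    refine ⟨hx, ?_, ?_⟩
    · rw [sub_ne_zero]
      intro h
      have : ‖x‖ = ‖(θ * ρ) • y‖ := by rw [h]
      rw [norm_smul, Real.norm_eq_abs, abs_mul] at this
      nlinarith [abs_nonneg ρ, norm_nonneg y, abs_nonneg θ]
    · intro h
      have h' : x = -(((1 - θ) * ρ) • y) := by
        rw [← sub_eq_zero]; rw [sub_neg_eq_add]; exact h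
      have : ‖x‖ = ‖((1 - θ) * ρ) • y‖ := by rw [h', norm_neg]
      rw [norm_smul, Real.norm_eq_abs, abs_mul] at this
      nlinarith [abs_nonneg ρ, norm_nonneg y, abs_nonneg (1 - θ)]
  -- analyticity at each point of the region
  have hGan : AnalyticOnNhd ℝ G
      {p : P | |p.2.2.2| * ‖p.2.1‖ < ‖p.1‖ ∧ p.2.2.1 ∈ Set.Icc (0 : ℝ) 1} := by
    rintro p ⟨hlt, hθm⟩
    obtain ⟨hx, hv2, hv3⟩ := hne p.1 p.2.1 p.2.2.1 p.2.2.2 hlt hθm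
    have hX : AnalyticAt ℝ (fun p : P => p.1) p := analyticAt_fst
    have hY : AnalyticAt ℝ (fun p : P => p.2.1) p := analyticAt_fst.comp analyticAt_snd
    have hT : AnalyticAt ℝ (fun p : P => p.2.2.1) p :=
      analyticAt_fst.comp (analyticAt_snd.comp analyticAt_snd)
    have hR : AnalyticAt ℝ (fun p : P => p.2.2.2) p :=
      analyticAt_snd.comp (analyticAt_snd.comp analyticAt_snd)
    have hV2 : AnalyticAt ℝ (fun p : P => p.1 - (p.2.2.1 * p.2.2.2) • p.2.1) p :=
      hX.sub ((hT.mul hR).smul hY)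
    have hV3 : AnalyticAt ℝ (fun p : P => p.1 + ((1 - p.2.2.1) * p.2.2.2) • p.2.1) p :=
      hX.add (((analyticAt_const.sub hT).mul hR).smul hY)
    have hA : AnalyticAt ℝ A p := my_analyticAt_norm hX hx
    have hB : AnalyticAt ℝ B p := my_analyticAt_norm hV2 hv2
    have hC : AnalyticAt ℝ C p := my_analyticAt_norm hV3 hv3
    have hQ : AnalyticAt ℝ Q p := by
      have h : AnalyticAt ℝ
          ((fun z : EE × EE => (inner ℝ z.1 z.2 : ℝ)) ∘ (fun p : P => (p.1, p.2.1))) p :=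
        AnalyticAt.comp (g := fun z : EE × EE => (inner ℝ z.1 z.2 : ℝ))
          (f := fun p : P => (p.1, p.2.1))
          ((innerSL ℝ (E := EE)).analyticAt_bilinear (p.1, p.2.1)) (hX.prod hY)
      exact h
    have hW : AnalyticAt ℝ W p := by
      have h : AnalyticAt ℝ
          ((fun z : EE × EE => (inner ℝ z.1 z.2 : ℝ)) ∘ (fun p : P => (p.2.1, p.2.1))) p :=
        AnalyticAt.comp (g := fun z : EE × EE => (inner ℝ z.1 z.2 : ℝ))
          (f := fun p : P => (p.2.1, p.2.1))
          ((innerSL ℝ (E := EE)).analyticAt_bilinear (p.2.1, p.2.1)) (hY.prod hY)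
      exact h
    have hA0 : 0 < A p := norm_pos_iff.mpr hx
    have hB0 : 0 < B p := norm_pos_iff.mpr hv2
    have hC0 : 0 < C p := norm_pos_iff.mpr hv3
    have hden : A p * B p * C p * (A p + B p) * (A p + C p) * (B p + C p) ≠ 0 := by positivity
    exact AnalyticAt.div
      (((hW.mul (((hT.mul hC).mul (hA.add hC)).add
          (((analyticAt_const.sub hT).mul hB).mul (hA.add hB)))).mul (hB.add hC)).add
        (((analyticAt_const.mul hQ).mul
          (((hR.mul hW).mul ((analyticAt_const.mul hT).sub analyticAt_const)).sub
            (analyticAt_const.mul hQ))).mul ((hA.add hB).add hC)))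
      (((((hA.mul hB).mul hC).mul (hA.add hB)).mul (hA.add hC)).mul (hB.add hC)) hden
  refine ⟨G, hGan.analyticOn, hGan.analyticOn.continuousOn, ?_, ?_⟩
  · -- value on θ ∈ (0,1), ρ > 0
    intro x y θ ρ hθ hρ hlt
    have hy0 : (0:ℝ) ≤ ρ * ‖y‖ := by positivity
    have ha : 0 < ‖x‖ := lt_of_le_of_lt hy0 hlt
    obtain ⟨hx, hv2, hv3⟩ := hne x y θ ρ (by rwa [abs_of_pos hρ]) ⟨hθ.1.le, hθ.2.le⟩
    have hb : 0 < ‖x - (θ * ρ) • y‖ := norm_pos_iff.mpr hv2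
    have hc : 0 < ‖x + ((1 - θ) * ρ) • y‖ := norm_pos_iff.mpr hv3
    have hb2 : ‖x - (θ * ρ) • y‖ ^ 2
        = ‖x‖ ^ 2 - 2 * θ * ρ * (inner ℝ x y : ℝ) + θ ^ 2 * ρ ^ 2 * (inner ℝ y y : ℝ) := by
      rw [norm_sub_sq_real, real_inner_smul_right, norm_smul, real_inner_self_eq_norm_sq]
      rw [mul_pow, Real.norm_eq_abs, sq_abs]
      ring
    have hc2 : ‖x + ((1 - θ) * ρ) • y‖ ^ 2
        = ‖x‖ ^ 2 + 2 * (1 - θ) * ρ * (inner ℝ x y : ℝ)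
          + (1 - θ) ^ 2 * ρ ^ 2 * (inner ℝ y y : ℝ) := by
      rw [norm_add_sq_real, real_inner_smul_right, norm_smul, real_inner_self_eq_norm_sq]
      rw [mul_pow, Real.norm_eq_abs, sq_abs]
      ring
    have := my_key ‖x‖ ‖x - (θ * ρ) • y‖ ‖x + ((1 - θ) * ρ) • y‖
      (inner ℝ x y : ℝ) (inner ℝ y y : ℝ) θ ρ ha hb hc hθ.1.ne' (by linarith [hθ.2]) hρ.ne' hb2 hc2
    exact this.symm
  · -- value at ρ = 0
    intro x y θ hx hθ
    have ha : (0:ℝ) < ‖x‖ := norm_pos_iff.mpr hx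
    have h1 : (θ * (0:ℝ)) • y = 0 := by rw [mul_zero, zero_smul]
    have h2 : ((1 - θ) * (0:ℝ)) • y = 0 := by rw [mul_zero, zero_smul]
    show (_ : ℝ) = hillF x y
    simp only [G, A, B, C, Q, W, h1, h2, sub_zero, add_zero, mul_zero, zero_mul, zero_smul]
    rw [real_inner_self_eq_norm_sq y, hillF]
    have hane : ‖x‖ ≠ 0 := ha.ne'
    set a := ‖x‖ with hadef
    set n := ‖y‖ with hndef
    set q := (inner ℝ x y : ℝ) with hqdef
    field_simp
    ring
end

section
/- For κ ∈ ℤ∖{-1,0} let r_κ = ((κ+1)/κ)^{2/3} and c_κ = (√r_κ/π) ∫_{-π}^{π} g_κ(t) cos(κt) dt, where g_κ(t) = (r_κ + 1/r_κ + (r_κ + 3cos t)/(2κ)) / (r_κ + 1/r_κ - 2 cos t)^{3/2}. Then c_κ > 0. -/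
open Real Filter Topology

noncomputable def gb (s : ℝ) : ℕ → ℝ
  | 0 => 1
  | k + 1 => gb s k * (s + k) / (k + 1)

lemma gb_pos {s : ℝ} (hs : 0 < s) : ∀ k, 0 < gb s k
  | 0 => one_pos
  | k + 1 => by
    have := gb_pos hs k
    have hk : (0:ℝ) < s + k := by positivity
    exact div_pos (mul_pos this hk) (by positivity)

lemma gb_succ_mul {s : ℝ} (k : ℕ) : gb s (k + 1) * (k + 1) = gb s k * (s + k) := by
  have h : ((k:ℝ) + 1) ≠ 0 := by positivity
  rw [show gb s (k+1) = gb s k * (s + k) / (k + 1) from rfl]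
  field_simp

lemma gb_le {s : ℝ} (hs : 0 < s) (hs2 : s ≤ 2) : ∀ k, gb s k ≤ k + 1
  | 0 => by norm_num [gb]
  | k + 1 => by
    have ih := gb_le hs hs2 k
    have h0 : 0 ≤ gb s k := (gb_pos hs k).le
    have hk1 : (0:ℝ) < (k:ℝ) + 1 := by positivity
    rw [show gb s (k+1) = gb s k * (s + k) / (k + 1) from rfl, div_le_iff₀ hk1]
    push_cast
    nlinarith [mul_le_mul_of_nonneg_right ih (by positivity : (0:ℝ) ≤ s + k)]

/-- master summability -/
lemma summable_sq_geom {x : ℝ} (hx : |x| < 1) :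
    Summable (fun k : ℕ => ((k:ℝ) + 1) ^ 2 * |x| ^ k) := by
  have h := summable_pow_mul_geometric_of_norm_lt_one (R := ℝ) 2 (r := |x|) (by simpa using hx)
  have h2 : Summable (fun k : ℕ => ((k:ℝ) ^ 2 + 2 * k + 1) * |x| ^ k) := by
    have h1 := summable_pow_mul_geometric_of_norm_lt_one (R := ℝ) 1 (r := |x|) (by simpa using hx)
    have h0 := summable_geometric_of_lt_one (abs_nonneg x) hx
    simp only [pow_one] at h1
    have := ((h.add ((h1.mul_left 2))).add h0)
    convert this using 2 with k
    case e'_3 => rfl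
    push_cast
    ring
  convert h2 using 2 with k
  ring

lemma summable_gb_mul {s : ℝ} (hs : 0 < s) (hs2 : s ≤ 2) {x : ℝ} (hx : |x| < 1)
    (c : ℕ → ℝ) (hc : ∀ k, |c k| ≤ 2 * ((k:ℝ) + 1)) :
    Summable (fun k : ℕ => c k * gb s k * x ^ k) := by
  apply Summable.of_norm
  apply Summable.of_nonneg_of_le (fun k => norm_nonneg _) _ ((summable_sq_geom hx).mul_left 2)
  intro k
  have h1 : |c k * gb s k * x ^ k| = |c k| * gb s k * |x| ^ k := by
    rw [abs_mul, abs_mul, abs_pow, abs_of_pos (gb_pos hs k)]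
  rw [Real.norm_eq_abs, h1]
  have := gb_le hs hs2 k
  have h0 : (0:ℝ) ≤ |x| ^ k := by positivity
  have h2 : |c k| * gb s k ≤ (2 * ((k:ℝ) + 1)) * ((k:ℝ) + 1) :=
    mul_le_mul (hc k) this (gb_pos hs k).le (by positivity)
  calc |c k| * gb s k * |x| ^ k ≤ ((2 * ((k:ℝ)+1)) * ((k:ℝ)+1)) * |x| ^ k :=
        mul_le_mul_of_nonneg_right h2 h0
    _ = 2 * (((k:ℝ)+1)^2 * |x|^k) := by ring

section Binomial

variable {s : ℝ} (hs : 0 < s) (hs2 : s ≤ 2)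

/-- The sum function of the binomial series. -/
noncomputable def fb (s : ℝ) (y : ℝ) : ℝ := ∑' k, gb s k * y ^ k

lemma summable_fb (hs : 0 < s) (hs2 : s ≤ 2) {y : ℝ} (hy : |y| < 1) :
    Summable (fun k => gb s k * y ^ k) := by
  have := summable_gb_mul hs hs2 hy (fun _ => 1) (fun k => by
    rw [abs_one]; have := Nat.cast_nonneg (α := ℝ) k; linarith)
  simpa using this

lemma summable_fb' (hs : 0 < s) (hs2 : s ≤ 2) {y : ℝ} (hy : |y| < 1) :
    Summable (fun k => gb s k * (s + k) * y ^ k) := by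
  have := summable_gb_mul hs hs2 hy (fun k => s + k) (fun k => by
    show |s + (k:ℝ)| ≤ 2 * ((k:ℝ) + 1)
    rw [abs_of_pos (by positivity)]; have := Nat.cast_nonneg (α := ℝ) k; linarith)
  convert this using 2 with k; ring

lemma hasDerivAt_fb (hs : 0 < s) (hs2 : s ≤ 2) {y : ℝ} (hy : |y| < 1) :
    HasDerivAt (fb s) (∑' k, gb s k * ((k:ℝ) * y ^ (k - 1))) y := by
  set R : ℝ := (1 + |y|) / 2 with hR
  have hR0 : 0 < R := by positivity
  have hyR : |y| < R := by rw [hR]; linarith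
  have hR1 : R < 1 := by rw [hR]; linarith
  have goal : HasDerivAt (fun z => ∑' k : ℕ, gb s k * z ^ k)
      (∑' k : ℕ, gb s k * ((k:ℝ) * y ^ (k - 1))) y := by
    apply hasDerivAt_tsum_of_isPreconnected
      (g := fun (k : ℕ) (z : ℝ) => gb s k * z ^ k)
      (g' := fun (k : ℕ) (z : ℝ) => gb s k * ((k:ℝ) * z ^ (k - 1)))
      (u := fun k : ℕ => ((k:ℝ) + 1) ^ 2 * R ^ k / R)
      (t := Set.Ioo (-R) R) (y₀ := 0)
    · apply Summable.div_const
      have : Summable (fun k : ℕ => ((k:ℝ) + 1) ^ 2 * |R| ^ k) :=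
        summable_sq_geom (by rwa [abs_of_pos hR0])
      simpa [abs_of_pos hR0] using this
    · exact isOpen_Ioo
    · exact (convex_Ioo _ _).isPreconnected
    · intro k z _
      exact (hasDerivAt_pow k z).const_mul (gb s k)
    · intro k z hz
      have hzR : |z| < R := abs_lt.mpr ⟨hz.1, hz.2⟩
      rcases Nat.eq_zero_or_pos k with rfl | hk
      · simp; positivity
      · have hk1 : k - 1 + 1 = k := Nat.succ_pred_eq_of_pos hk
        have hb : |z| ^ (k-1) ≤ R ^ (k-1) := pow_le_pow_left₀ (abs_nonneg z) hzR.le _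
        have hgb : gb s k ≤ (k:ℝ) + 1 := gb_le hs hs2 k
        rw [Real.norm_eq_abs, abs_mul, abs_mul, abs_of_pos (gb_pos hs k), abs_pow]
        rw [abs_of_nonneg (Nat.cast_nonneg k : (0:ℝ) ≤ k)]
        have h1 : gb s k * ((k:ℝ) * |z| ^ (k-1)) ≤ ((k:ℝ)+1) * (((k:ℝ)+1) * R ^ (k-1)) := by
          apply mul_le_mul hgb _ (by positivity) (by positivity)
          exact mul_le_mul (by linarith) hb (by positivity) (by positivity)
        have h2 : R ^ (k - 1) = R ^ k / R := by
          rw [eq_div_iff hR0.ne', ← pow_succ, hk1]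
        calc gb s k * ((k:ℝ) * |z| ^ (k-1)) ≤ ((k:ℝ)+1) * (((k:ℝ)+1) * R ^ (k-1)) := h1
          _ = ((k:ℝ) + 1) ^ 2 * R ^ k / R := by rw [h2]; ring
    · exact Set.mem_Ioo.mpr ⟨by linarith, hR0⟩
    · apply summable_of_ne_finset_zero (s := {0})
      intro k hk
      have : k ≠ 0 := by simpa using hk
      simp [zero_pow this]
    · exact Set.mem_Ioo.mpr (abs_lt.mp hyR)
  exact goal

lemma deriv_series_eq (hs : 0 < s) (hs2 : s ≤ 2) {y : ℝ} (hy : |y| < 1) :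
    ∑' k, gb s k * ((k:ℝ) * y ^ (k - 1)) = ∑' k, gb s k * (s + k) * y ^ k := by
  have hsum : Summable (fun k => gb s k * ((k:ℝ) * y ^ (k-1))) := by
    rw [← summable_nat_add_iff 1]
    have := summable_fb' hs hs2 hy
    apply this.congr
    intro k
    have h := gb_succ_mul (s := s) k
    push_cast
    calc gb s k * (s + k) * y ^ k = (gb s (k+1) * ((k:ℝ)+1)) * y ^ k := by rw [h]
      _ = gb s (k+1) * (((k:ℝ)+1) * y ^ (k + 1 - 1)) := by
          rw [Nat.add_sub_cancel]; ring
  rw [Summable.tsum_eq_zero_add hsum]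
  simp only [Nat.cast_zero, zero_mul, mul_zero, zero_add]
  congr 1
  ext k
  have : gb s (k+1) * ((k:ℝ)+1) = gb s k * (s + k) := gb_succ_mul k
  push_cast
  calc gb s (k+1) * (((k:ℝ)+1) * y ^ (k + 1 - 1)) = (gb s (k+1) * ((k:ℝ)+1)) * y ^ k := by
        rw [Nat.add_sub_cancel]; ring
    _ = gb s k * (s + k) * y ^ k := by rw [this]

/-- The generalized binomial series. -/
lemma hasSum_binomial (hs : 0 < s) (hs2 : s ≤ 2) {y : ℝ} (hy : |y| < 1) :
    HasSum (fun k => gb s k * y ^ k) ((1 - y) ^ (-s)) := by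
  have hy1 : 0 < 1 - y := by
    have := abs_lt.mp hy; linarith [this.2]
  -- the ODE identity
  have ode : ∀ z : ℝ, |z| < 1 →
      (1 - z) * (∑' k, gb s k * (s + k) * z ^ k) = s * fb s z := by
    intro z hz
    have hD : HasSum (fun k => gb s k * (s + (k:ℝ)) * z ^ k)
        (∑' k, gb s k * (s + k) * z ^ k) := (summable_fb' hs hs2 hz).hasSum
    have hf : HasSum (fun k => gb s k * z ^ k) (fb s z) := (summable_fb hs hs2 hz).hasSum
    set D := ∑' k, gb s k * (s + (k:ℝ)) * z ^ k with hDdef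
    set h : ℕ → ℝ := fun k => (k:ℝ) * gb s k * z ^ k with hdef
    have hzD : HasSum (fun k => h (k + 1)) (z * D) := by
      have := hD.mul_left z
      apply HasSum.congr_fun this
      intro k
      have hgb := gb_succ_mul (s := s) k
      show ((k:ℕ)+1 : ℕ) * gb s (k+1) * z ^ (k+1) = z * (gb s k * (s + (k:ℝ)) * z ^ k)
      push_cast
      rw [pow_succ]
      linear_combination (z ^ k * z) * hgb
    have hh : HasSum h (z * D) := by
      have h0 : h 0 = 0 := by simp [hdef]
      have : HasSum (fun k => h (k + 1)) (z * D - ∑ i ∈ Finset.range 1, h i) := by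
        simpa [h0] using hzD
      exact (hasSum_nat_add_iff' 1).mp this
    have hh2 : HasSum h (D - s * fb s z) := by
      have := hD.sub (hf.mul_left s)
      apply HasSum.congr_fun this
      intro k
      show (k:ℝ) * gb s k * z ^ k = gb s k * (s + (k:ℝ)) * z ^ k - s * (gb s k * z ^ k)
      ring
    have := hh.unique hh2
    linarith [this]
  -- derivative of H := fb * (1-·)^s is 0 on Ioo (-1) 1
  have hderiv : ∀ z ∈ Set.Ioo (-1:ℝ) 1,
      HasDerivAt (fun w => fb s w * (1 - w) ^ s) 0 z := by
    intro z hz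
    have hz' : |z| < 1 := abs_lt.mpr ⟨hz.1, hz.2⟩
    have hz1 : 0 < 1 - z := by linarith [hz.2]
    have hd1 : HasDerivAt (fb s) (∑' k, gb s k * (s + (k:ℝ)) * z ^ k) z := by
      have := hasDerivAt_fb hs hs2 hz'
      rwa [deriv_series_eq hs hs2 hz'] at this
    have inner : HasDerivAt (fun w : ℝ => 1 - w) (-1) z := by
      simpa using (hasDerivAt_id z).const_sub 1
    have outer : HasDerivAt (fun x : ℝ => x ^ s) (s * (1 - z) ^ (s - 1)) (1 - z) :=
      Real.hasDerivAt_rpow_const (Or.inl hz1.ne')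
    have hd2 : HasDerivAt (fun w : ℝ => (1 - w) ^ s) (s * (1 - z) ^ (s - 1) * (-1)) z :=
      outer.comp z inner
    have := hd1.mul hd2
    refine this.congr_deriv ?_
    have hsplit : (1 - z) ^ s = (1 - z) ^ (s - 1) * (1 - z) := by
      rw [Real.rpow_sub_one hz1.ne', div_mul_cancel₀]
      exact hz1.ne'
    have hode := ode z hz'
    rw [hsplit]
    linear_combination ((1 - z) ^ (s - 1)) * hode
  -- constancy
  have hconst : fb s y * (1 - y) ^ s = fb s 0 * (1 - 0) ^ s := by
    apply (convex_Ioo (-1:ℝ) 1).is_const_of_fderivWithin_eq_zero (𝕜 := ℝ)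
      (f := fun w => fb s w * (1 - w) ^ s)
    · intro z hz
      exact ((hderiv z hz).differentiableAt).differentiableWithinAt
    · intro z hz
      rw [fderivWithin_of_isOpen isOpen_Ioo hz]
      have := ((hderiv z hz).hasFDerivAt).fderiv
      rw [this]
      ext w
      simp
    · exact abs_lt.mp hy |> fun h => Set.mem_Ioo.mpr ⟨h.1, h.2⟩
    · exact Set.mem_Ioo.mpr ⟨by norm_num, by norm_num⟩
  have hfb0 : fb s 0 = 1 := by
    show (∑' k, gb s k * (0:ℝ) ^ k) = 1
    rw [tsum_eq_single 0 (fun k hk => by simp [zero_pow hk])]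
    simp [gb]
  rw [hfb0, sub_zero, Real.one_rpow, mul_one] at hconst
  have hrp : (0:ℝ) < (1 - y) ^ s := Real.rpow_pos_of_pos hy1 s
  have hval : fb s y = (1 - y) ^ (-s) := by
    rw [Real.rpow_neg hy1.le]
    field_simp at hconst ⊢
    linarith [hconst]
  have := (summable_fb hs hs2 hy).hasSum
  rwa [show (∑' k, gb s k * y ^ k) = fb s y from rfl, hval] at this

end Binomial

section Trig

open intervalIntegral

/-- Trigonometric moments. -/
noncomputable def T (k n : ℕ) : ℝ := ∫ t in (-π)..π, (cos t) ^ k * cos (n * t)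

lemma contTk (k n : ℕ) : Continuous fun t : ℝ => (cos t) ^ k * cos ((n:ℝ) * t) := by
  continuity

lemma T_zero_zero : T 0 0 = 2 * π := by
  simp [T]
  ring

lemma T_zero_succ (n : ℕ) : T 0 (n + 1) = 0 := by
  have hc : ((n:ℝ) + 1) ≠ 0 := by positivity
  have := integral_comp_mul_left (a := -π) (b := π) (fun x => cos x) hc
  simp only [T, pow_zero, one_mul]
  push_cast
  rw [this, integral_cos]
  have h1 : sin (((n:ℝ)+1) * π) = 0 := by
    have : ((n:ℝ)+1) * π = (((n+1:ℕ)):ℝ) * π := by push_cast; ring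
    rw [this, Real.sin_nat_mul_pi]
  have h2 : sin (((n:ℝ)+1) * -π) = 0 := by
    have : ((n:ℝ)+1) * -π = -((((n+1:ℕ)):ℝ) * π) := by push_cast; ring
    rw [this, Real.sin_neg, Real.sin_nat_mul_pi, neg_zero]
  rw [h1, h2]
  simp

lemma cos_mul_cos (x y : ℝ) : cos x * cos y = (cos (x + y) + cos (x - y)) / 2 := by
  rw [Real.cos_add, Real.cos_sub]; ring

lemma T_rec (k n : ℕ) : T (k+1) (n+1) = (T k (n+2) + T k n) / 2 := by
  have h1 : ∀ t : ℝ, (cos t) ^ (k+1) * cos (((n:ℝ)+1) * t)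
      = ((cos t) ^ k * cos (((n:ℝ)+2) * t) + (cos t) ^ k * cos ((n:ℝ) * t)) / 2 := by
    intro t
    have := cos_mul_cos (((n:ℝ)+1) * t) t
    have e1 : ((n:ℝ)+1) * t + t = ((n:ℝ)+2) * t := by ring
    have e2 : ((n:ℝ)+1) * t - t = (n:ℝ) * t := by ring
    rw [e1, e2] at this
    rw [pow_succ]
    calc (cos t) ^ k * cos t * cos (((n:ℝ)+1)*t) = (cos t) ^ k * (cos (((n:ℝ)+1)*t) * cos t) := by ring
      _ = (cos t) ^ k * ((cos (((n:ℝ)+2)*t) + cos ((n:ℝ)*t))/2) := by rw [this]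
      _ = _ := by ring
  have i1 := (contTk k (n+2)).intervalIntegrable (μ := MeasureTheory.volume) (-π) π
  have i2 := (contTk k n).intervalIntegrable (μ := MeasureTheory.volume) (-π) π
  push_cast at i1 i2 ⊢
  calc T (k+1) (n+1) = ∫ t in (-π)..π, ((cos t) ^ k * cos (((n:ℝ)+2) * t) + (cos t) ^ k * cos ((n:ℝ) * t)) / 2 := by
        rw [T]; push_cast; exact integral_congr (fun t _ => h1 t)
    _ = (T k (n+2) + T k n) / 2 := by
        simp only [T, div_eq_mul_inv]
        rw [integral_mul_const, integral_add i1 i2]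
        push_cast
        ring
  
lemma T_rec0 (k : ℕ) : T (k+1) 0 = T k 1 := by
  have h1 : ∀ t : ℝ, (cos t) ^ (k+1) * cos ((0:ℝ) * t) = (cos t) ^ k * cos ((1:ℝ) * t) := by
    intro t
    simp [pow_succ]
  simp only [T]
  push_cast
  exact integral_congr (fun t _ => h1 t)

lemma T_nonneg : ∀ k n, 0 ≤ T k n := by
  intro k
  induction k with
  | zero => intro n; cases n with
    | zero => rw [T_zero_zero]; positivity
    | succ m => rw [T_zero_succ]
  | succ k ih => intro n; cases n with
    | zero => rw [T_rec0]; exact ih 1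
    | succ m => rw [T_rec]; have := ih (m+2); have := ih m; linarith
    
lemma T_diag_pos : ∀ n, 0 < T n n := by
  intro n
  induction n with
  | zero => rw [T_zero_zero]; positivity
  | succ m ih => rw [T_rec]; have := T_nonneg m (m+2); linarith

end Trig

section Key

open intervalIntegral MeasureTheory

lemma contD {a : ℝ} (ha : 2 < a) {s : ℝ} (n : ℕ) :
    Continuous fun t : ℝ => (a - 2 * cos t) ^ (-s) * cos ((n:ℝ) * t) := by
  apply Continuous.mul _ (by continuity)
  apply Continuous.rpow_const (by continuity)
  intro t
  left
  have := Real.neg_one_le_cos t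
  have := Real.cos_le_one t
  nlinarith

lemma key_hasSum {a : ℝ} (ha : 2 < a) {s : ℝ} (hs : 0 < s) (hs2 : s ≤ 2) (n : ℕ) :
    HasSum (fun k => gb s k * (2/a) ^ k * a ^ (-s) * T k n)
      (∫ t in (-π)..π, (a - 2 * cos t) ^ (-s) * cos ((n:ℝ) * t)) := by
  have ha0 : (0:ℝ) < a := by linarith
  have hxa : |2/a| < 1 := by
    rw [abs_of_pos (by positivity), div_lt_one ha0]; linarith
  have hsummable : Summable (fun k => gb s k * (2/a) ^ k * a ^ (-s)) := by
    have h1 := summable_gb_mul hs hs2 hxa (fun _ => 1)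
      (fun k => by rw [abs_one]; have := Nat.cast_nonneg (α := ℝ) k; linarith)
    simp only [one_mul] at h1
    exact h1.mul_right _
  have main : HasSum
      (fun k => ∫ t in (-π)..π, gb s k * (2/a) ^ k * a ^ (-s) * ((cos t) ^ k * cos ((n:ℝ) * t)))
      (∫ t in (-π)..π, (a - 2 * cos t) ^ (-s) * cos ((n:ℝ) * t)) := by
    refine intervalIntegral.hasSum_integral_of_dominated_convergence
      (bound := fun k _ => gb s k * (2/a) ^ k * a ^ (-s)) ?_ ?_ ?_ ?_ ?_
    · intro k
      exact ((continuous_const.mul (contTk k n))).aestronglyMeasurable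
    · intro k
      filter_upwards with t ht
      have h1 : |cos t ^ k * cos ((n:ℝ)*t)| ≤ 1 := by
        rw [abs_mul, abs_pow]
        have hp : |cos t| ^ k ≤ 1 := pow_le_one₀ (abs_nonneg _) (Real.abs_cos_le_one t)
        have h2 := Real.abs_cos_le_one ((n:ℝ)*t)
        nlinarith [abs_nonneg (cos ((n:ℝ)*t)), pow_nonneg (abs_nonneg (cos t)) k]
      have hnn : 0 ≤ gb s k * (2/a)^k * a^(-s) := by
        have h3 := (gb_pos hs k).le
        have h4 : (0:ℝ) ≤ a ^ (-s) := (Real.rpow_pos_of_pos ha0 _).le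
        positivity
      rw [Real.norm_eq_abs, abs_mul, abs_of_nonneg hnn]
      nlinarith [abs_nonneg (cos t ^ k * cos ((n:ℝ)*t))]
    · filter_upwards with t ht
      exact hsummable
    · exact intervalIntegrable_const
    · filter_upwards with t ht
      set y : ℝ := 2/a * cos t with hy
      have hy1 : |y| < 1 := by
        rw [hy, abs_mul]
        calc |2/a| * |cos t| ≤ |2/a| * 1 :=
          mul_le_mul_of_nonneg_left (Real.abs_cos_le_one t) (abs_nonneg _)
        _ < 1 := by rw [mul_one]; exact hxa
      have hb := hasSum_binomial hs hs2 hy1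
      have h1y : (0:ℝ) < 1 - y := by
        have := abs_lt.mp hy1; linarith [this.2]
      have hc := (hb.mul_left (a ^ (-s))).mul_right (cos ((n:ℝ) * t))
      have heq : (a:ℝ) ^ (-s) * (1 - y) ^ (-s) = (a - 2 * cos t) ^ (-s) := by
        rw [← Real.mul_rpow ha0.le h1y.le]
        congr 1
        rw [hy]
        field_simp
      rw [heq] at hc
      apply HasSum.congr_fun hc
      intro k
      show gb s k * (2/a) ^ k * a ^ (-s) * (cos t ^ k * cos ((n:ℝ)*t))
          = a ^ (-s) * (gb s k * y ^ k) * cos ((n:ℝ)*t)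
      rw [hy, mul_pow]
      ring
  apply HasSum.congr_fun main
  intro k
  show gb s k * (2/a) ^ k * a ^ (-s) * T k n
      = ∫ t in (-π)..π, gb s k * (2/a) ^ k * a ^ (-s) * ((cos t) ^ k * cos ((n:ℝ) * t))
  rw [T, intervalIntegral.integral_const_mul]

lemma key_pos {a : ℝ} (ha : 2 < a) {s : ℝ} (hs : 0 < s) (hs2 : s ≤ 2) (n : ℕ) :
    0 < ∫ t in (-π)..π, (a - 2 * cos t) ^ (-s) * cos ((n:ℝ) * t) := by
  have ha0 : (0:ℝ) < a := by linarith
  have h := key_hasSum ha hs hs2 n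
  have hterm : ∀ k, 0 ≤ gb s k * (2/a) ^ k * a ^ (-s) * T k n := by
    intro k
    have := (gb_pos hs k).le
    have := T_nonneg k n
    have : (0:ℝ) ≤ a ^ (-s) := (Real.rpow_pos_of_pos ha0 _).le
    positivity
  have hn : 0 < gb s n * (2/a) ^ n * a ^ (-s) * T n n := by
    have h1 := gb_pos hs n
    have h2 := T_diag_pos n
    have h3 : (0:ℝ) < a ^ (-s) := Real.rpow_pos_of_pos ha0 _
    positivity
  calc (0:ℝ) < gb s n * (2/a) ^ n * a ^ (-s) * T n n := hn
    _ ≤ _ := le_hasSum h n (fun k _ => hterm k)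

end Key

section Final

open intervalIntegral

lemma split3 {A : ℝ} (hA : 2 < A) {c1 c2 c3 s1 s2 s3 : ℝ}
    (hs1 : 0 < s1) (hs12 : s1 ≤ 2) (hs2 : 0 < s2) (hs22 : s2 ≤ 2)
    (hs3 : 0 < s3) (hs32 : s3 ≤ 2)
    (hc1 : 0 < c1) (hc2 : 0 ≤ c2) (hc3 : 0 ≤ c3) (j1 j2 j3 : ℕ) {g : ℝ → ℝ}
    (hg : ∀ t, g t = c1 * ((A - 2*cos t) ^ (-s1) * cos ((j1:ℝ)*t))
        + c2 * ((A - 2*cos t) ^ (-s2) * cos ((j2:ℝ)*t))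
        + c3 * ((A - 2*cos t) ^ (-s3) * cos ((j3:ℝ)*t))) :
    0 < ∫ t in (-π)..π, g t := by
  have i1 : IntervalIntegrable (fun t => c1 * ((A - 2*cos t) ^ (-s1) * cos ((j1:ℝ)*t)))
      MeasureTheory.volume (-π) π :=
    (continuous_const.mul (contD hA j1 (s := s1))).intervalIntegrable _ _
  have i2 : IntervalIntegrable (fun t => c2 * ((A - 2*cos t) ^ (-s2) * cos ((j2:ℝ)*t)))
      MeasureTheory.volume (-π) π :=
    (continuous_const.mul (contD hA j2 (s := s2))).intervalIntegrable _ _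
  have i3 : IntervalIntegrable (fun t => c3 * ((A - 2*cos t) ^ (-s3) * cos ((j3:ℝ)*t)))
      MeasureTheory.volume (-π) π :=
    (continuous_const.mul (contD hA j3 (s := s3))).intervalIntegrable _ _
  have heq : (∫ t in (-π)..π, g t)
      = (∫ t in (-π)..π, c1 * ((A - 2*cos t) ^ (-s1) * cos ((j1:ℝ)*t)))
      + (∫ t in (-π)..π, c2 * ((A - 2*cos t) ^ (-s2) * cos ((j2:ℝ)*t)))
      + (∫ t in (-π)..π, c3 * ((A - 2*cos t) ^ (-s3) * cos ((j3:ℝ)*t))) := by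
    rw [← integral_add i1 i2, ← integral_add (i1.add i2) i3]
    exact integral_congr (fun t _ => hg t)
  rw [heq, integral_const_mul, integral_const_mul, integral_const_mul]
  have k1 := key_pos hA hs1 hs12 j1
  have k2 := key_pos hA hs2 hs22 j2
  have k3 := key_pos hA hs3 hs32 j3
  have : 0 < c1 * ∫ t in (-π)..π, (A - 2*cos t) ^ (-s1) * cos ((j1:ℝ)*t) := mul_pos hc1 k1
  nlinarith [mul_nonneg hc2 k2.le, mul_nonneg hc3 k3.le]

end Final

/-- Positivity of the coefficients `c_κ` for `κ ∈ ℤ ∖ {-1, 0}`: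
`c_κ = (√r_κ/π) ∫_{-π}^{π} g_κ(t) cos(κt) dt > 0`, where `r_κ = ((κ+1)/κ)^{2/3}` and
`g_κ(t) = (r_κ + 1/r_κ + (r_κ + 3cos t)/(2κ)) / (r_κ + 1/r_κ - 2cos t)^{3/2}`. -/
theorem stmt18 (κ : ℤ) (h0 : κ ≠ 0) (h1 : κ ≠ -1) :
    let r : ℝ := (((κ : ℝ) + 1) / (κ : ℝ)) ^ ((2 : ℝ) / 3)
    0 < Real.sqrt r / Real.pi *
        ∫ t in (-Real.pi)..Real.pi,
          (r + 1 / r + (r + 3 * Real.cos t) / (2 * (κ : ℝ))) /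
              (r + 1 / r - 2 * Real.cos t) ^ ((3 : ℝ) / 2) *
            Real.cos ((κ : ℝ) * t) := by
  intro r
  have hκ0 : (κ:ℝ) ≠ 0 := Int.cast_ne_zero.mpr h0
  have hq : 0 < ((κ:ℝ) + 1) / κ := by
    rcases lt_or_gt_of_ne h0 with hneg | hpos
    · have hκ2 : κ ≤ -2 := by omega
      have h2 : (κ:ℝ) ≤ -2 := by exact_mod_cast hκ2
      apply div_pos_of_neg_of_neg <;> linarith
    · have h2 : (1:ℝ) ≤ κ := by exact_mod_cast hpos
      apply div_pos <;> linarith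
  have hq1 : ((κ:ℝ) + 1) / κ ≠ 1 := by
    intro h
    rw [div_eq_one_iff_eq hκ0] at h
    linarith
  have hrdef : r = ((((κ:ℝ) + 1) / κ) ^ ((2:ℝ)/3)) := rfl
  have hr : 0 < r := Real.rpow_pos_of_pos hq _
  have hr1 : r ≠ 1 := by
    intro h
    apply hq1
    have hx : (((κ:ℝ)+1)/κ) ^ (((2:ℝ)/3) * ((3:ℝ)/2))
        = ((((κ:ℝ)+1)/κ) ^ ((2:ℝ)/3)) ^ ((3:ℝ)/2) := Real.rpow_mul hq.le _ _
    rw [← hrdef, h, Real.one_rpow, show ((2:ℝ)/3) * ((3:ℝ)/2) = 1 by norm_num,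
      Real.rpow_one] at hx
    exact hx
  have h2A : 2 < r + 1/r := by
    have hne : r - 1 ≠ 0 := sub_ne_zero.mpr hr1
    have hsq : 0 < (r-1)^2 := lt_of_le_of_ne (sq_nonneg _) (Ne.symm (pow_ne_zero 2 hne))
    have hkey : r + 1/r - 2 = (r-1)^2 / r := by field_simp; ring
    have := div_pos hsq hr
    linarith [hkey ▸ this]
  clear_value r
  apply mul_pos (div_pos (Real.sqrt_pos.mpr hr) Real.pi_pos)
  have hDpos : ∀ t : ℝ, 0 < r + 1/r - 2 * cos t := by
    intro t
    have := Real.cos_le_one t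
    nlinarith
  rcases lt_or_gt_of_ne h0 with hneg | hpos
  · -- κ ≤ -2
    have hκ2 : κ ≤ -2 := by omega
    set n : ℕ := (-κ).toNat with hndef
    have hn : (κ:ℝ) = -(n:ℝ) := by
      have : ((-κ).toNat : ℤ) = -κ := Int.toNat_of_nonneg (by omega)
      have : ((n:ℤ):ℝ) = ((-κ:ℤ):ℝ) := by exact_mod_cast this
      push_cast at this
      linarith
    have hN2 : (2:ℝ) ≤ (n:ℝ) := by
      have h2 : (2:ℤ) ≤ (n:ℤ) := by
        rw [hndef]
        omega
      exact_mod_cast h2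
    set N : ℝ := (n:ℝ) with hNdef
    have hN0 : 0 < N := by linarith
    have hc1 : 0 < ((r + 1/r)*(4*N-3) - 2*r)/(4*N) := by
      apply div_pos _ (by linarith)
      have h5 : (5:ℝ) ≤ 4*N - 3 := by linarith
      have hApos : (0:ℝ) < r + 1/r := by linarith
      nlinarith [mul_le_mul_of_nonneg_left h5 hApos.le, one_div_pos.mpr hr]
    have hg : ∀ t : ℝ, (r + 1 / r + (r + 3 * cos t) / (2 * (κ:ℝ))) /
              (r + 1 / r - 2 * cos t) ^ ((3:ℝ) / 2) * cos ((κ:ℝ) * t)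
        = (((r + 1/r)*(4*N-3) - 2*r)/(4*N)) * ((r + 1/r - 2*cos t) ^ (-((3:ℝ)/2)) * cos ((n:ℝ)*t))
        + (3/(4*N)) * ((r + 1/r - 2*cos t) ^ (-((1:ℝ)/2)) * cos ((n:ℝ)*t))
        + 0 * ((r + 1/r - 2*cos t) ^ (-((3:ℝ)/2)) * cos (((0:ℕ):ℝ)*t)) := by
      intro t
      have hD := hDpos t
      have h32 : (r + 1/r - 2*cos t) ^ (-((3:ℝ)/2))
          = ((r + 1/r - 2*cos t) ^ ((3:ℝ)/2))⁻¹ := by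
        rw [Real.rpow_neg hD.le]
      have h12 : (r + 1/r - 2*cos t) ^ (-((1:ℝ)/2))
          = (r + 1/r - 2*cos t) * ((r + 1/r - 2*cos t) ^ ((3:ℝ)/2))⁻¹ := by
        rw [show (-((1:ℝ)/2)) = 1 + -((3:ℝ)/2) by norm_num, Real.rpow_add hD,
          Real.rpow_one, h32]
      have hcos : cos ((κ:ℝ) * t) = cos (N * t) := by
        rw [hn, show -(N) * t = -(N*t) by ring, Real.cos_neg]
      rw [hcos, h32, h12, hn]
      rw [← hNdef]
      set Q : ℝ := (r + 1/r - 2*cos t) ^ ((3:ℝ)/2) with hQd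
      have hQne : Q ≠ 0 := (Real.rpow_pos_of_pos hD _).ne'
      clear_value Q
      have hNne : N ≠ 0 := by positivity
      have hrne : r ≠ 0 := hr.ne'
      field_simp
      ring
    exact split3 h2A (by norm_num) (by norm_num) (by norm_num) (by norm_num)
      (by norm_num) (by norm_num) hc1 (by positivity) (le_refl 0) n n 0 hg
  · -- κ ≥ 1
    have hκ1 : 1 ≤ κ := hpos
    set n : ℕ := κ.toNat with hndef
    have hn : (κ:ℝ) = (n:ℝ) := by
      have : ((κ.toNat:ℤ)) = κ := Int.toNat_of_nonneg (by omega)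
      exact_mod_cast this.symm
    obtain ⟨m, hm⟩ : ∃ m, n = m + 1 := ⟨n - 1, by omega⟩
    have hN1 : (1:ℝ) ≤ (n:ℝ) := by
      have : (1:ℤ) ≤ (n:ℤ) := by omega
      exact_mod_cast this
    set N : ℝ := (n:ℝ) with hNdef
    have hN0 : 0 < N := by linarith
    have hmN : (m:ℝ) = N - 1 := by
      rw [hNdef, hm]; push_cast; ring
    have hc1 : 0 < r + 1/r + r/(2*N) := by positivity
    have hg : ∀ t : ℝ, (r + 1 / r + (r + 3 * cos t) / (2 * (κ:ℝ))) /
              (r + 1 / r - 2 * cos t) ^ ((3:ℝ) / 2) * cos ((κ:ℝ) * t)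
        = (r + 1/r + r/(2*N)) * ((r + 1/r - 2*cos t) ^ (-((3:ℝ)/2)) * cos ((n:ℝ)*t))
        + (3/(4*N)) * ((r + 1/r - 2*cos t) ^ (-((3:ℝ)/2)) * cos (((n+1:ℕ):ℝ)*t))
        + (3/(4*N)) * ((r + 1/r - 2*cos t) ^ (-((3:ℝ)/2)) * cos (((m:ℕ):ℝ)*t)) := by
      intro t
      have hD := hDpos t
      have h32 : (r + 1/r - 2*cos t) ^ (-((3:ℝ)/2))
          = ((r + 1/r - 2*cos t) ^ ((3:ℝ)/2))⁻¹ := by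
        rw [Real.rpow_neg hD.le]
      have hct := cos_mul_cos (N * t) t
      have e1 : N * t + t = (N+1) * t := by ring
      have e2 : N * t - t = (N-1) * t := by ring
      rw [e1, e2] at hct
      have hj2 : ((n+1:ℕ):ℝ) = N + 1 := by push_cast; ring
      have hj3 : ((m:ℕ):ℝ) = N - 1 := hmN
      rw [h32, hn, hj2, hj3]
      have hsub : cos ((N+1)*t) = 2*(cos (N*t)*cos t) - cos ((N-1)*t) := by
        have := hct
        linarith
      rw [hsub]
      rw [← hNdef]
      set Q : ℝ := (r + 1/r - 2*cos t) ^ ((3:ℝ)/2) with hQd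
      have hQne : Q ≠ 0 := (Real.rpow_pos_of_pos hD _).ne'
      clear_value Q
      have hNne : N ≠ 0 := by positivity
      have hrne : r ≠ 0 := hr.ne'
      field_simp
      ring
    exact split3 h2A (by norm_num) (by norm_num) (by norm_num) (by norm_num)
      (by norm_num) (by norm_num) hc1 (by positivity) (by positivity) n (n+1) m hg
end
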